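/- Let s ≥ 0, n = 2^s, and 0 ≤ k ≤ s. For every node u in ZMod n, the set of nodes reachable from u by adding a subset of the Bruck offsets {2^k, 2^(k+1), …, 2^(s−1)} (each offset used at most once), i.e. the set { u + ∑_{j=k}^{s−1} ε_j · 2^j : ε_j ∈ {0,1} }, is exactly the residue class of u modulo 2^k, i.e. the set { w ∈ ZMod n : ∃ c ∈ ZMod n, w = u + c · 2^k }. -/

import Mathlib

lemma binary_expansion : ∀ (t m : ℕ), m < 2 ^ t →
    ∑ i ∈ Finset.range t, (m / 2 ^ i % 2) * 2 ^ i = m := by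
  intro t
  induction t with
  | zero => intro m hm; interval_cases m; simp
  | succ t ih =>
    intro m hm
    have h2 : m / 2 < 2 ^ t := by
      have : m < 2 * 2 ^ t := by rw [← pow_succ']; exact hm
      omega
    have key := ih (m / 2) h2
    rw [Finset.sum_range_succ']
    have hstep : ∀ i, m / 2 ^ (i + 1) % 2 * 2 ^ (i + 1) =
        2 * (m / 2 / 2 ^ i % 2 * 2 ^ i) := by
      intro i
      rw [pow_succ', Nat.mul_comm 2 (2 ^ i)]
      rw [show m / (2 ^ i * 2) = m / 2 / 2 ^ i by
        rw [Nat.div_div_eq_div_mul, Nat.mul_comm]]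
      ring
    simp only [hstep]
    rw [← Finset.mul_sum, key]
    simp
    omega

/-- Reachability content of the subring lemma: the set of nodes reachable from `u`
by adding a subset of the Bruck offsets `{2^k, …, 2^(s-1)}` (each at most once)
is exactly the residue class of `u` modulo `2^k` in `ZMod (2^s)`. -/
theorem bruck_reachable_eq_residue_class (s k : ℕ) (hk : k ≤ s) (u : ZMod (2 ^ s)) :
    {w : ZMod (2 ^ s) | ∃ ε : ℕ → ℕ, (∀ j, ε j ≤ 1) ∧
        w = u + ∑ j ∈ Finset.Ico k s, (ε j : ZMod (2 ^ s)) * 2 ^ j} =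
    {w : ZMod (2 ^ s) | ∃ c : ZMod (2 ^ s), w = u + c * 2 ^ k} := by
  ext w
  simp only [Set.mem_setOf_eq]
  constructor
  · rintro ⟨ε, hε, rfl⟩
    refine ⟨∑ j ∈ Finset.Ico k s, (ε j : ZMod (2 ^ s)) * 2 ^ (j - k), ?_⟩
    congr 1
    rw [Finset.sum_mul]
    refine Finset.sum_congr rfl fun j hj => ?_
    rw [Finset.mem_Ico] at hj
    rw [mul_assoc, ← pow_add, Nat.sub_add_cancel hj.1]
  · rintro ⟨c, rfl⟩
    set m := c.val % 2 ^ (s - k) with hm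
    have hmlt : m < 2 ^ (s - k) := Nat.mod_lt _ (Nat.pow_pos (by norm_num))
    refine ⟨fun j => m / 2 ^ (j - k) % 2, fun j => by
      show m / 2 ^ (j - k) % 2 ≤ 1; omega, ?_⟩
    congr 1
    -- reduce c * 2^k to (m * 2^k : ℕ)
    have hc : c * 2 ^ k = ((m * 2 ^ k : ℕ) : ZMod (2 ^ s)) := by
      have hcv : c = ((c.val : ℕ) : ZMod (2 ^ s)) := by
        rw [ZMod.natCast_val, ZMod.cast_id]
      have hdecomp : c.val * 2 ^ k = c.val / 2 ^ (s - k) * 2 ^ s + m * 2 ^ k := by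
        have h1 : c.val = c.val / 2 ^ (s - k) * 2 ^ (s - k) + m := by
          rw [hm]; exact (Nat.div_add_mod' c.val (2 ^ (s - k))).symm
        calc c.val * 2 ^ k = (c.val / 2 ^ (s - k) * 2 ^ (s - k) + m) * 2 ^ k := by
              rw [← h1]
          _ = c.val / 2 ^ (s - k) * (2 ^ (s - k) * 2 ^ k) + m * 2 ^ k := by ring
          _ = c.val / 2 ^ (s - k) * 2 ^ s + m * 2 ^ k := by
              rw [← pow_add, Nat.sub_add_cancel hk]
      calc c * 2 ^ k = ((c.val * 2 ^ k : ℕ) : ZMod (2 ^ s)) := by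
            push_cast [ZMod.natCast_val, ZMod.cast_id]; ring
        _ = ((m * 2 ^ k : ℕ) : ZMod (2 ^ s)) := by
            rw [hdecomp]; push_cast
            rw [show ((2 : ZMod (2 ^ s)) ^ s) = ((2 ^ s : ℕ) : ZMod (2 ^ s)) by
              push_cast; ring, ZMod.natCast_self]
            ring
    rw [hc]
    rw [Finset.sum_Ico_eq_sum_range]
    have : ∀ i ∈ Finset.range (s - k),
        ((m / 2 ^ (k + i - k) % 2 : ℕ) : ZMod (2 ^ s)) * 2 ^ (k + i) =
        ((m / 2 ^ i % 2 * 2 ^ i * 2 ^ k : ℕ) : ZMod (2 ^ s)) := by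
      intro i _
      rw [Nat.add_sub_cancel_left]
      push_cast
      ring
    rw [Finset.sum_congr rfl this, ← Nat.cast_sum, ← Finset.sum_mul,
      binary_expansion _ _ hmlt]
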